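/- Let G be a compact Lie group and let f : A → B be a based G-map between cofibrant objects. A G-connected based G-space X is local with respect to Σf : ΣA → ΣB (with trivial G-action on the suspension coordinate) if and only if the based loop space ΩX is f-local. -/

import Mathlib

noncomputable section

namespace EquivLoc

/-! ## Weak homotopy equivalences of topological spaces -/

section Plain

variable {A B : Type} [TopologicalSpace A] [TopologicalSpace B]

/-- The induced map on path components. -/
def pi0Map (f : C(A, B)) : ZerothHomotopy A → ZerothHomotopy B :=
  Quotient.map f (fun _ _ h => Nonempty.map (fun p => p.map f.continuous) h)

/-- The induced map on homotopy groups (classes of generalized loops). -/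
def piMap (n : ℕ) (f : C(A, B)) (a : A) :
    HomotopyGroup (Fin n) A a → HomotopyGroup (Fin n) B (f a) :=
  Quotient.map
    (fun p => ⟨f.comp p.1, fun y hy => by
      simp [ContinuousMap.comp_apply, p.2 y hy]⟩)
    (fun p q h => h.map fun H => H.compContinuousMap f)

/-- A continuous map is a weak homotopy equivalence if it induces a bijection on path
components and on all homotopy groups at all basepoints. -/
def IsWeakHomotopyEquiv (f : C(A, B)) : Prop :=
  Function.Bijective (pi0Map f) ∧ ∀ (a : A) (n : ℕ), Function.Bijective (piMap (n + 1) f a)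

/-- A map is a Serre fibration if it has the homotopy lifting property with respect to
all cubes. -/
def IsSerreFibration (p : C(A, B)) : Prop :=
  ∀ (n : ℕ) (h : C((Fin n → unitInterval), A)) (K : C(((Fin n → unitInterval) × unitInterval), B)),
    (∀ z, K (z, 0) = p (h z)) →
    ∃ L : C(((Fin n → unitInterval) × unitInterval), A), (∀ z, L (z, 0) = h z) ∧ ∀ w, p (L w) = K w

end Plain

/-! ## `G`-spaces -/

variable (G : Type) [Group G] [TopologicalSpace G]

/-- A `G`-space: a topological space with an action of `G` by homeomorphisms. -/
structure GSpace where
  carrier : Type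
  [topInst : TopologicalSpace carrier]
  [mulInst : MulAction G carrier]
  smul_cont : ∀ g : G, Continuous fun x : carrier => g • x

attribute [instance] GSpace.topInst GSpace.mulInst

variable {G}

/-- The action of `g` as a continuous self-map. -/
def GSpace.smulCM (X : GSpace G) (g : G) : C(X.carrier, X.carrier) :=
  ⟨fun x => g • x, X.smul_cont g⟩

/-- Equivariant continuous maps of `G`-spaces. -/
@[ext]
structure GMap (X Y : GSpace G) where
  toCM : C(X.carrier, Y.carrier)
  equivar : ∀ (g : G) (x : X.carrier), toCM (g • x) = g • toCM x

instance {X Y : GSpace G} : CoeFun (GMap X Y) (fun _ => X.carrier → Y.carrier) :=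
  ⟨fun f => f.toCM⟩

/-- The identity `G`-map. -/
protected def GMap.id (X : GSpace G) : GMap X X :=
  ⟨ContinuousMap.id _, fun _ _ => rfl⟩

/-- Composition of `G`-maps. -/
def GMap.comp {X Y Z : GSpace G} (f : GMap Y Z) (g : GMap X Y) : GMap X Z :=
  ⟨f.toCM.comp g.toCM, fun a x => by
    simp only [ContinuousMap.comp_apply, g.equivar, f.equivar]⟩

/-- The `H`-fixed point space of a `G`-space. -/
abbrev Fix (H : Subgroup G) (X : GSpace G) : Type :=
  {x : X.carrier // ∀ h ∈ H, h • x = x}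

/-- The map induced on `H`-fixed points by a `G`-map. -/
def GMap.fixCM {X Y : GSpace G} (f : GMap X Y) (H : Subgroup G) : C(Fix H X, Fix H Y) :=
  ⟨fun x => ⟨f x.1, fun h hh => by rw [← f.equivar, x.2 h hh]⟩,
    Continuous.subtype_mk (f.toCM.continuous.comp continuous_subtype_val) _⟩

/-- A `G`-map is a `G`-weak equivalence if it is a weak homotopy equivalence on the
`H`-fixed points for all closed subgroups `H ≤ G`. -/
def IsGWeakEquiv {X Y : GSpace G} (f : GMap X Y) : Prop :=
  ∀ H : Subgroup G, IsClosed (H : Set G) → IsWeakHomotopyEquiv (f.fixCM H)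

/-- A `G`-map is a `G`-fibration if it is a Serre fibration on the `H`-fixed points for
all closed subgroups `H ≤ G`. -/
def IsGFibration {X Y : GSpace G} (f : GMap X Y) : Prop :=
  ∀ H : Subgroup G, IsClosed (H : Set G) → IsSerreFibration (f.fixCM H)

/-- The one-point `G`-space. -/
def ptG : GSpace G where
  carrier := PUnit
  mulInst := { smul := fun _ x => x, one_smul := fun _ => rfl, mul_smul := fun _ _ _ => rfl }
  smul_cont := fun _ => continuous_id

/-- The unique `G`-map to the one-point `G`-space. -/
def GMap.toPt (X : GSpace G) : GMap X (ptG (G := G)) :=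
  ⟨⟨fun _ => PUnit.unit, continuous_const⟩, fun _ _ => rfl⟩

/-- A `G`-space is fibrant if the map to the point is a `G`-fibration. -/
def GFibrant (X : GSpace G) : Prop :=
  IsGFibration (GMap.toPt X)

/-- Trivial `G`-fibrations: simultaneously `G`-fibrations and `G`-weak equivalences. -/
def IsGTrivFib {X Y : GSpace G} (f : GMap X Y) : Prop :=
  IsGFibration f ∧ IsGWeakEquiv f

/-- A `G`-space is cofibrant if it has the left lifting property (for maps from it)
against all trivial `G`-fibrations. -/
def GCofibrant (A : GSpace G) : Prop :=
  ∀ {X Y : GSpace G} (p : GMap X Y), IsGTrivFib p →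
    ∀ v : GMap A Y, ∃ l : GMap A X, p.comp l = v

/-- A `G`-map is a cofibration if it has the left lifting property against all trivial
`G`-fibrations. -/
def IsGCofibration {A B : GSpace G} (i : GMap A B) : Prop :=
  ∀ {X Y : GSpace G} (p : GMap X Y), IsGTrivFib p →
    ∀ (u : GMap A X) (v : GMap B Y), p.comp u = v.comp i →
      ∃ l : GMap B X, l.comp i = u ∧ p.comp l = v

/-! ## Mapping `G`-spaces with the conjugation action -/

/-- The mapping space `Map(A, X)` with the conjugation `G`-action. -/
def mapG (A X : GSpace G) : GSpace G where
  carrier := C(A.carrier, X.carrier)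
  mulInst :=
    { smul := fun g φ => (X.smulCM g).comp (φ.comp (A.smulCM g⁻¹))
      one_smul := fun φ => by
        ext a
        show (X.smulCM 1) (φ ((A.smulCM 1⁻¹) a)) = φ a
        simp [GSpace.smulCM]
      mul_smul := fun g h φ => by
        ext a
        show (X.smulCM (g * h)) (φ ((A.smulCM (g * h)⁻¹) a))
            = (X.smulCM g) ((X.smulCM h) (φ ((A.smulCM h⁻¹) ((A.smulCM g⁻¹) a))))
        simp [GSpace.smulCM, mul_smul, mul_inv_rev] }
  smul_cont := fun g =>
    (ContinuousMap.continuous_postcomp (X.smulCM g)).comp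
      (ContinuousMap.continuous_precomp (A.smulCM g⁻¹))

/-- Precomposition with a `G`-map, as a `G`-map of conjugation mapping spaces. -/
def precompG {A B : GSpace G} (f : GMap A B) (X : GSpace G) :
    GMap (mapG B X) (mapG A X) where
  toCM := ⟨fun φ => φ.comp f.toCM, ContinuousMap.continuous_precomp f.toCM⟩
  equivar := fun g φ => by
    show ((X.smulCM g).comp (φ.comp (B.smulCM g⁻¹))).comp f.toCM
        = (X.smulCM g).comp ((φ.comp f.toCM).comp (A.smulCM g⁻¹))
    ext a
    simp [GSpace.smulCM, f.equivar]
    exact congrArg (fun x => ContinuousMap.toFun (X := B.carrier) (Y := X.carrier) φ x)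
      (f.equivar g⁻¹ a).symm

/-- A `G`-space `X` is `f`-local if `X` is fibrant and the induced map
`Map(B, X) → Map(A, X)` of conjugation mapping spaces is a `G`-weak equivalence. -/
def IsFLocal {A B : GSpace G} (f : GMap A B) (X : GSpace G) : Prop :=
  GFibrant X ∧ IsGWeakEquiv (precompG f X)

/-! ## `G`-homotopies -/

/-- Two `G`-maps are `G`-homotopic if there is an equivariant homotopy between them,
where `G` acts trivially on the interval coordinate. -/
def GHomotopic {X Y : GSpace G} (f₀ f₁ : GMap X Y) : Prop :=
  ∃ H : C(X.carrier × unitInterval, Y.carrier),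
    (∀ x, H (x, 0) = f₀ x) ∧ (∀ x, H (x, 1) = f₁ x) ∧
      ∀ (g : G) (x : X.carrier) (t : unitInterval), H (g • x, t) = g • H (x, t)

/-- A `G`-map is a `G`-homotopy equivalence if it admits an inverse up to `G`-homotopy. -/
def IsGHtpyEquivMap {X Y : GSpace G} (u : GMap X Y) : Prop :=
  ∃ v : GMap Y X, GHomotopic (v.comp u) (GMap.id X) ∧ GHomotopic (u.comp v) (GMap.id Y)

/-- Two `G`-spaces are `G`-homotopy equivalent. -/
def GHtpyEquiv (X Y : GSpace G) : Prop :=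
  ∃ u : GMap X Y, IsGHtpyEquivMap u

/-- The product of two `G`-spaces with the diagonal action. -/
def prodG (X Y : GSpace G) : GSpace G where
  carrier := X.carrier × Y.carrier
  smul_cont := fun g =>
    ((X.smul_cont g).comp continuous_fst).prodMk ((Y.smul_cont g).comp continuous_snd)

/-! ## The equivariant localization functor -/

/-- The data of a coaugmented localization functor `L_f^G` with respect to a `G`-map `f`:
a functor `L` on `G`-spaces together with a natural coaugmentation `j_X : X → L X` such
that each `L X` is `f`-local and `j_X` is universal (up to `G`-homotopy) among `G`-maps
from `X` into `f`-local `G`-spaces. -/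
structure GLocalization {A B : GSpace G} (f : GMap A B) where
  L : GSpace G → GSpace G
  map : ∀ {X Y : GSpace G}, GMap X Y → GMap (L X) (L Y)
  j : ∀ X : GSpace G, GMap X (L X)
  map_id : ∀ X : GSpace G, map (GMap.id X) = GMap.id (L X)
  map_comp : ∀ {X Y Z : GSpace G} (u : GMap X Y) (v : GMap Y Z),
    map (v.comp u) = (map v).comp (map u)
  naturality : ∀ {X Y : GSpace G} (u : GMap X Y), (j Y).comp u = (map u).comp (j X)
  isLocal : ∀ X : GSpace G, IsFLocal f (L X)
  factor : ∀ {X Y : GSpace G}, IsFLocal f Y → ∀ u : GMap X Y,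
    ∃ k : GMap (L X) Y, GHomotopic (k.comp (j X)) u
  unique : ∀ {X Y : GSpace G}, IsFLocal f Y → ∀ (u : GMap X Y) (k k' : GMap (L X) Y),
    GHomotopic (k.comp (j X)) u → GHomotopic (k'.comp (j X)) u → GHomotopic k k'

end EquivLoc
namespace EquivLoc

variable {G : Type} [Group G] [TopologicalSpace G]

/-! ## Based `G`-spaces -/

/-- A based `G`-space: a `G`-space with a `G`-fixed basepoint. -/
structure GSpacePt (G : Type) [Group G] [TopologicalSpace G] extends GSpace G where
  pt : carrier
  pt_fixed : ∀ g : G, g • pt = pt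

/-- Based `G`-maps. -/
structure GMapPt (X Y : GSpacePt G) extends GMap X.toGSpace Y.toGSpace where
  map_pt : toCM X.pt = Y.pt

/-- The identity based `G`-map. -/
protected def GMapPt.id (X : GSpacePt G) : GMapPt X X :=
  ⟨GMap.id X.toGSpace, rfl⟩

/-- Composition of based `G`-maps. -/
def GMapPt.comp {X Y Z : GSpacePt G} (f : GMapPt Y Z) (g : GMapPt X Y) : GMapPt X Z :=
  ⟨(f.toGMap).comp g.toGMap, by
    show f.toCM (g.toCM X.pt) = Z.pt
    rw [g.map_pt, f.map_pt]⟩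

/-- Based `G`-homotopy: an equivariant homotopy which is constant at the basepoint. -/
def GHomotopicPt {X Y : GSpacePt G} (f₀ f₁ : GMapPt X Y) : Prop :=
  ∃ H : C(X.carrier × unitInterval, Y.carrier),
    (∀ x, H (x, 0) = f₀.toCM x) ∧ (∀ x, H (x, 1) = f₁.toCM x) ∧
      (∀ (g : G) (x : X.carrier) (t : unitInterval), H (g • x, t) = g • H (x, t)) ∧
      ∀ t : unitInterval, H (X.pt, t) = Y.pt

/-- A based `G`-map is a based `G`-homotopy equivalence if it admits an inverse up to
based `G`-homotopy. -/
def IsGHtpyEquivMapPt {X Y : GSpacePt G} (u : GMapPt X Y) : Prop :=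
  ∃ v : GMapPt Y X,
    GHomotopicPt (v.comp u) (GMapPt.id X) ∧ GHomotopicPt (u.comp v) (GMapPt.id Y)

/-- Two based `G`-spaces are based `G`-homotopy equivalent. -/
def GHtpyEquivPt (X Y : GSpacePt G) : Prop :=
  ∃ u : GMapPt X Y, IsGHtpyEquivMapPt u

/-- The one-point based `G`-space. -/
def ptGPt : GSpacePt G where
  toGSpace := ptG (G := G)
  pt := PUnit.unit
  pt_fixed := fun _ => rfl

/-- Based cofibrancy: the left lifting property, in the based category, against all
trivial `G`-fibrations. -/
def GCofibrantPt (A : GSpacePt G) : Prop :=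
  ∀ {X Y : GSpacePt G} (p : GMapPt X Y), IsGTrivFib p.toGMap →
    ∀ v : GMapPt A Y, ∃ l : GMapPt A X, p.comp l = v

/-! ## Based mapping spaces with conjugation action -/

/-- The conjugation of a based continuous map. -/
def conjCM (A X : GSpacePt G) (g : G)
    (φ : C(A.carrier, X.carrier)) : C(A.carrier, X.carrier) :=
  (X.toGSpace.smulCM g).comp (φ.comp (A.toGSpace.smulCM g⁻¹))

lemma conjCM_pt (A X : GSpacePt G) (g : G) (φ : C(A.carrier, X.carrier))
    (hφ : φ A.pt = X.pt) : conjCM A X g φ A.pt = X.pt := by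
  show g • φ (g⁻¹ • A.pt) = X.pt
  rw [A.pt_fixed, hφ, X.pt_fixed]

/-- The based mapping space `Map₊(A, X)` with the conjugation `G`-action. -/
def mapGPt (A X : GSpacePt G) : GSpacePt G where
  carrier := {φ : C(A.carrier, X.carrier) // φ A.pt = X.pt}
  mulInst :=
    { smul := fun g φ => ⟨conjCM A X g φ.1, conjCM_pt A X g φ.1 φ.2⟩
      one_smul := fun φ => by
        apply Subtype.ext
        ext a
        show (1 : G) • φ.1 ((1 : G)⁻¹ • a) = φ.1 a
        simp
      mul_smul := fun g h φ => by
        apply Subtype.ext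
        ext a
        show (g * h) • φ.1 ((g * h)⁻¹ • a) = g • (h • φ.1 (h⁻¹ • g⁻¹ • a))
        simp [mul_smul, mul_inv_rev] }
  smul_cont := fun g => by
    apply Continuous.subtype_mk
    exact ((ContinuousMap.continuous_postcomp (X.toGSpace.smulCM g)).comp
      (ContinuousMap.continuous_precomp (A.toGSpace.smulCM g⁻¹))).comp
      continuous_subtype_val
  pt := ⟨ContinuousMap.const _ X.pt, rfl⟩
  pt_fixed := fun g => by
    apply Subtype.ext
    ext a
    show g • X.pt = X.pt
    exact X.pt_fixed g

lemma precomp_mem {A B : GSpacePt G} (f : GMapPt A B) (X : GSpacePt G)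
    (φ : {ψ : C(B.carrier, X.carrier) // ψ B.pt = X.pt}) :
    (φ.1.comp f.toCM) A.pt = X.pt := by
  show φ.1 (f.toCM A.pt) = X.pt
  rw [f.map_pt, φ.2]

/-- Precomposition with a based `G`-map, as a based `G`-map of based mapping spaces. -/
def precompGPt {A B : GSpacePt G} (f : GMapPt A B) (X : GSpacePt G) :
    GMapPt (mapGPt B X) (mapGPt A X) where
  toCM := ⟨fun φ => ⟨φ.1.comp f.toCM, precomp_mem f X φ⟩,
    Continuous.subtype_mk
      ((ContinuousMap.continuous_precomp f.toCM).comp continuous_subtype_val)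
      (fun φ => precomp_mem f X φ)⟩
  equivar := fun g φ => by
    apply Subtype.ext
    ext a
    show g • φ.1 (g⁻¹ • f.toCM a) = g • φ.1 (f.toCM (g⁻¹ • a))
    rw [f.equivar]
  map_pt := by
    apply Subtype.ext
    ext a
    rfl

/-- A based `G`-space `X` is `f`-local, for a based `G`-map `f : A → B`, if `X` is fibrant
and the induced map `Map₊(B, X) → Map₊(A, X)` is a `G`-weak equivalence. -/
def IsFLocalPt {A B : GSpacePt G} (f : GMapPt A B) (X : GSpacePt G) : Prop :=
  GFibrant X.toGSpace ∧ IsGWeakEquiv (precompGPt f X).toGMap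

/-! ## Loop spaces -/

/-- The based loop space of a based `G`-space, with the pointwise `G`-action. -/
def Loop (X : GSpacePt G) : GSpacePt G where
  carrier := {γ : C(unitInterval, X.carrier) // γ 0 = X.pt ∧ γ 1 = X.pt}
  mulInst :=
    { smul := fun g γ => ⟨(X.toGSpace.smulCM g).comp γ.1, by
        show g • γ.1 0 = X.pt ∧ g • γ.1 1 = X.pt
        rw [γ.2.1, γ.2.2, X.pt_fixed]; exact ⟨rfl, rfl⟩⟩
      one_smul := fun γ => by
        apply Subtype.ext; ext t
        show (1 : G) • γ.1 t = γ.1 t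
        simp
      mul_smul := fun g h γ => by
        apply Subtype.ext; ext t
        show (g * h) • γ.1 t = g • h • γ.1 t
        rw [mul_smul] }
  smul_cont := fun g => by
    apply Continuous.subtype_mk
    exact (ContinuousMap.continuous_postcomp (X.toGSpace.smulCM g)).comp
      continuous_subtype_val
  pt := ⟨ContinuousMap.const _ X.pt, rfl, rfl⟩
  pt_fixed := fun g => by
    apply Subtype.ext; ext t
    show g • X.pt = X.pt
    exact X.pt_fixed g

/-- Iterated loop space. -/
def LoopIter : ℕ → GSpacePt G → GSpacePt G
  | 0, X => X
  | n + 1, X => Loop (LoopIter n X)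

/-! ## Reduced suspension -/

/-- The relation collapsing `A × {0} ∪ A × {1} ∪ {pt} × I` to a point. -/
def suspRel (X : GSpacePt G) (a b : X.carrier × unitInterval) : Prop :=
  a = b ∨ ((a.2 = 0 ∨ a.2 = 1 ∨ a.1 = X.pt) ∧ (b.2 = 0 ∨ b.2 = 1 ∨ b.1 = X.pt))

/-- The `G`-action on the reduced suspension. -/
instance suspAction (X : GSpacePt G) : MulAction G (Quot (suspRel X)) where
  smul := fun g => Quot.lift (fun z => Quot.mk _ (g • z.1, z.2))
        (by
          rintro a b (rfl | ⟨ha, hb⟩)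
          · rfl
          · apply Quot.sound
            right
            constructor
            · rcases ha with h | h | h
              · exact Or.inl h
              · exact Or.inr (Or.inl h)
              · refine Or.inr (Or.inr ?_)
                show g • a.1 = X.pt
                rw [h, X.pt_fixed]
            · rcases hb with h | h | h
              · exact Or.inl h
              · exact Or.inr (Or.inl h)
              · refine Or.inr (Or.inr ?_)
                show g • b.1 = X.pt
                rw [h, X.pt_fixed])
  one_smul := fun q => by
    refine Quot.inductionOn q fun z => ?_
    show Quot.mk _ ((1 : G) • z.1, z.2) = Quot.mk _ z
    rw [one_smul]
  mul_smul := fun g h q => by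
    refine Quot.inductionOn q fun z => ?_
    show Quot.mk _ ((g * h) • z.1, z.2) = Quot.mk _ (g • (h • z.1), z.2)
    rw [mul_smul]

/-- The reduced suspension of a based `G`-space, with trivial action on the suspension
coordinate. -/
def Susp (X : GSpacePt G) : GSpacePt G where
  carrier := Quot (suspRel X)
  smul_cont := fun g => by
    apply continuous_quot_lift
    exact continuous_quot_mk.comp
      (((X.smul_cont g).comp continuous_fst).prodMk continuous_snd)
  pt := Quot.mk _ (X.pt, 0)
  pt_fixed := fun g => by
    show Quot.mk _ (g • X.pt, (0 : unitInterval)) = Quot.mk _ (X.pt, (0 : unitInterval))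
    rw [X.pt_fixed]

/-- The suspension of a based continuous map, as a continuous map. -/
def suspCM {X Y : GSpacePt G} (f : GMapPt X Y) :
    C(Quot (suspRel X), Quot (suspRel Y)) :=
  ⟨Quot.lift (fun z => Quot.mk _ (f.toCM z.1, z.2))
(by
      rintro a b (rfl | ⟨ha, hb⟩)
      · rfl
      · apply Quot.sound
        right
        constructor
        · rcases ha with h | h | h
          · exact Or.inl h
          · exact Or.inr (Or.inl h)
          · refine Or.inr (Or.inr ?_)
            show f.toCM a.1 = Y.pt
            rw [h, f.map_pt]
        · rcases hb with h | h | h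
          · exact Or.inl h
          · exact Or.inr (Or.inl h)
          · refine Or.inr (Or.inr ?_)
            show f.toCM b.1 = Y.pt
            rw [h, f.map_pt]),
    by
      apply continuous_quot_lift
      exact continuous_quot_mk.comp
        ((f.toCM.continuous.comp continuous_fst).prodMk continuous_snd)⟩

lemma suspCM_mk {X Y : GSpacePt G} (f : GMapPt X Y) (z : X.carrier × unitInterval) :
    (suspCM f) (Quot.mk (suspRel X) z) = Quot.mk (suspRel Y) (f.toCM z.1, z.2) := rfl

lemma susp_smul_mk (X : GSpacePt G) (g : G) (z : X.carrier × unitInterval) :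
    (g • Quot.mk (suspRel X) z : Quot (suspRel X)) = Quot.mk (suspRel X) (g • z.1, z.2) := rfl

/-- The suspension of a based `G`-map. -/
def SuspMap {X Y : GSpacePt G} (f : GMapPt X Y) : GMapPt (Susp X) (Susp Y) where
  toCM := suspCM f
  equivar := fun g q => by
    refine Quot.inductionOn q fun z => ?_
    show (suspCM f) (g • Quot.mk (suspRel X) z) = g • ((suspCM f) (Quot.mk (suspRel X) z))
    rw [susp_smul_mk, suspCM_mk, suspCM_mk, susp_smul_mk, f.equivar]
  map_pt := by
    show Quot.mk _ (f.toCM X.pt, (0 : unitInterval)) = Quot.mk _ (Y.pt, (0 : unitInterval))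
    rw [f.map_pt]

/-- Iterated reduced suspension. -/
def SuspIter : ℕ → GSpacePt G → GSpacePt G
  | 0, X => X
  | n + 1, X => Susp (SuspIter n X)

/-- Iterated suspension of a based `G`-map. -/
def SuspMapIter : ∀ (n : ℕ) {X Y : GSpacePt G}, GMapPt X Y → GMapPt (SuspIter n X) (SuspIter n Y)
  | 0, _, _, f => f
  | n + 1, _, _, f => SuspMap (SuspMapIter n f)

/-! ## Connectivity -/

/-- A `G`-space is `G`-connected if all fixed point spaces of closed subgroups are
connected. -/
def GConnected (X : GSpace G) : Prop :=
  ∀ H : Subgroup G, IsClosed (H : Set G) → ConnectedSpace (Fix H X)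

/-- The basepoint of the `H`-fixed point space of a based `G`-space. -/
def fixPt (H : Subgroup G) (X : GSpacePt G) : Fix H X.toGSpace :=
  ⟨X.pt, fun h _ => X.pt_fixed h⟩

/-- A based `G`-space is `G`-simply connected if all fixed point spaces of closed
subgroups are path connected and simply connected. -/
def GSimplyConnected (Y : GSpacePt G) : Prop :=
  ∀ H : Subgroup G, IsClosed (H : Set G) →
    Subsingleton (ZerothHomotopy (Fix H Y.toGSpace)) ∧
      Subsingleton (HomotopyGroup (Fin 1) (Fix H Y.toGSpace) (fixPt H Y))

/-! ## Based equivariant localization -/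

/-- The data of a coaugmented localization functor `L_f^G` on based `G`-spaces with
respect to a based `G`-map `f`. -/
structure GLocalizationPt {A B : GSpacePt G} (f : GMapPt A B) where
  L : GSpacePt G → GSpacePt G
  map : ∀ {X Y : GSpacePt G}, GMapPt X Y → GMapPt (L X) (L Y)
  j : ∀ X : GSpacePt G, GMapPt X (L X)
  map_id : ∀ X : GSpacePt G, map (GMapPt.id X) = GMapPt.id (L X)
  map_comp : ∀ {X Y Z : GSpacePt G} (u : GMapPt X Y) (v : GMapPt Y Z),
    map (v.comp u) = (map v).comp (map u)
  naturality : ∀ {X Y : GSpacePt G} (u : GMapPt X Y), (j Y).comp u = (map u).comp (j X)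
  isLocal : ∀ X : GSpacePt G, IsFLocalPt f (L X)
  factor : ∀ {X Y : GSpacePt G}, IsFLocalPt f Y → ∀ u : GMapPt X Y,
    ∃ k : GMapPt (L X) Y, GHomotopicPt (k.comp (j X)) u
  unique : ∀ {X Y : GSpacePt G}, IsFLocalPt f Y → ∀ (u : GMapPt X Y) (k k' : GMapPt (L X) Y),
    GHomotopicPt (k.comp (j X)) u → GHomotopicPt (k'.comp (j X)) u → GHomotopic k.toGMap k'.toGMap

/-- A based `G`-space `A` is `L^G`-good if for every based `G`-map `f` between cofibrant
based `G`-spaces, every localization functor `L_f^G` for `f`, and every based `G`-space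
`X`, the localization `L_f^G Map₊(A, X)` is based `G`-homotopy equivalent to `Map₊(A, Y)`
for some `G`-simply connected based `G`-space `Y`. -/
def IsLGoodPt (A : GSpacePt G) : Prop :=
  ∀ {C D : GSpacePt G} (f : GMapPt C D), GCofibrantPt C → GCofibrantPt D →
    ∀ (Lf : GLocalizationPt f) (X : GSpacePt G),
      ∃ Y : GSpacePt G, GSimplyConnected Y ∧ GHtpyEquivPt (Lf.L (mapGPt A X)) (mapGPt A Y)

end EquivLoc
namespace EquivLoc

open scoped unitInterval Topology
open Topology.Homotopy

/-! ### Transfer of weak homotopy equivalences along homeomorphisms -/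

section PlainTransfer

variable {A B A' B' : Type} [TopologicalSpace A] [TopologicalSpace B]
  [TopologicalSpace A'] [TopologicalSpace B']

private lemma pi0Map_mk (f : C(A, B)) (a : A) :
    pi0Map f (Quotient.mk _ a) = Quotient.mk _ (f a) := rfl

private lemma bij_pi0_transfer (eA : A ≃ₜ A') (eB : B ≃ₜ B') (p : C(A, B)) (p' : C(A', B'))
    (hc : ∀ a, p' (eA a) = eB (p a)) (hp : Function.Bijective (pi0Map p)) :
    Function.Bijective (pi0Map p') := by
  have hc' : ∀ a', p (eA.symm a') = eB.symm (p' a') := by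
    intro a'
    have h1 := hc (eA.symm a')
    rw [eA.apply_symm_apply] at h1
    rw [h1, eB.symm_apply_apply]
  constructor
  · intro x y
    refine Quotient.inductionOn₂ x y fun u v h => ?_
    rw [pi0Map_mk, pi0Map_mk] at h
    have hj : Joined (p' u) (p' v) := Quotient.exact h
    obtain ⟨pth⟩ := hj
    have hπ : Joined (p (eA.symm u)) (p (eA.symm v)) :=
      ⟨(pth.map eB.symm.continuous).cast (hc' u) (hc' v)⟩
    have h2 : pi0Map p (Quotient.mk _ (eA.symm u)) = pi0Map p (Quotient.mk _ (eA.symm v)) := by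
      rw [pi0Map_mk, pi0Map_mk]
      exact Quotient.sound hπ
    have h3 := hp.1 h2
    have hj2 : Joined (eA.symm u) (eA.symm v) := Quotient.exact h3
    obtain ⟨sg⟩ := hj2
    refine Quotient.sound ?_
    exact ⟨(sg.map eA.continuous).cast (eA.apply_symm_apply u).symm (eA.apply_symm_apply v).symm⟩
  · intro z
    refine Quotient.inductionOn z fun b' => ?_
    obtain ⟨w, hw⟩ := hp.2 (Quotient.mk _ (eB.symm b'))
    revert hw
    refine Quotient.inductionOn w fun a hw => ?_
    rw [pi0Map_mk] at hw
    refine ⟨Quotient.mk _ (eA a), ?_⟩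
    rw [pi0Map_mk, hc a]
    have hj : Joined (p a) (eB.symm b') := Quotient.exact hw
    obtain ⟨pth⟩ := hj
    exact Quotient.sound ⟨(pth.map eB.continuous).cast rfl (eB.apply_symm_apply b').symm⟩

private def pushGL {n : ℕ} (f : C(A, B)) {a : A} {b : B} (hb : f a = b)
    (γ : GenLoop (Fin n) A a) : GenLoop (Fin n) B b :=
  ⟨f.comp γ.1, fun y hy => by
    simp only [ContinuousMap.comp_apply]
    rw [γ.2 y hy, hb]⟩

private lemma pushGL_homotopic {n : ℕ} (f : C(A, B)) {a : A} {b : B} (hb : f a = b)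
    {γ δ : GenLoop (Fin n) A a} (h : GenLoop.Homotopic γ δ) :
    GenLoop.Homotopic (pushGL f hb γ) (pushGL f hb δ) :=
  h.map fun H => H.compContinuousMap f

private lemma piMap_mk {n : ℕ} (f : C(A, B)) (a : A) (γ : GenLoop (Fin n) A a) :
    piMap n f a (Quotient.mk _ γ) = Quotient.mk _ (pushGL f rfl γ) := rfl

private lemma bij_piMap_transfer {n : ℕ} (eA : A ≃ₜ A') (eB : B ≃ₜ B')
    (p : C(A, B)) (p' : C(A', B')) (hc : ∀ a, p' (eA a) = eB (p a)) (a' : A')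
    (hp : Function.Bijective (piMap n p (eA.symm a'))) :
    Function.Bijective (piMap n p' a') := by
  have hc' : ∀ x', p (eA.symm x') = eB.symm (p' x') := by
    intro x'
    have h1 := hc (eA.symm x')
    rw [eA.apply_symm_apply] at h1
    rw [h1, eB.symm_apply_apply]
  have hb1 : eB.symm (p' a') = p (eA.symm a') := (hc' a').symm
  have hb2 : eB (p (eA.symm a')) = p' a' := by
    rw [hc' a', eB.apply_symm_apply]
  have hAa : eA (eA.symm a') = a' := eA.apply_symm_apply a'
  have key : ∀ γ : GenLoop (Fin n) A' a',
      pushGL ((eB.symm : C(B', B))) hb1 (pushGL p' rfl γ)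
        = pushGL p rfl (pushGL (eA.symm : C(A', A)) rfl γ) := by
    intro γ
    apply Subtype.ext
    ext y
    exact (hc' (γ.1 y)).symm
  constructor
  · intro x y
    refine Quotient.inductionOn₂ x y fun γ δ h => ?_
    rw [piMap_mk, piMap_mk] at h
    have h1 : GenLoop.Homotopic (pushGL p' rfl γ) (pushGL p' rfl δ) := Quotient.exact h
    have h2 := pushGL_homotopic ((eB.symm : C(B', B))) hb1 h1
    rw [key γ, key δ] at h2
    have h3 : piMap n p (eA.symm a') (Quotient.mk _ (pushGL (eA.symm : C(A', A)) rfl γ))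
        = piMap n p (eA.symm a') (Quotient.mk _ (pushGL (eA.symm : C(A', A)) rfl δ)) := by
      rw [piMap_mk, piMap_mk]
      exact Quotient.sound h2
    have h4 := hp.1 h3
    have h5 : GenLoop.Homotopic (pushGL (eA.symm : C(A', A)) rfl γ)
        (pushGL (eA.symm : C(A', A)) rfl δ) := Quotient.exact h4
    have h6 := pushGL_homotopic (eA : C(A, A')) hAa h5
    have keyA : ∀ γ : GenLoop (Fin n) A' a',
        pushGL (eA : C(A, A')) hAa (pushGL (eA.symm : C(A', A)) rfl γ) = γ := by
      intro γ
      apply Subtype.ext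
      ext y
      exact eA.apply_symm_apply (γ.1 y)
    rw [keyA γ, keyA δ] at h6
    exact Quotient.sound h6
  · intro z
    refine Quotient.inductionOn z fun τ => ?_
    obtain ⟨w, hw⟩ := hp.2 (Quotient.mk _ (pushGL ((eB.symm : C(B', B))) hb1 τ))
    revert hw
    refine Quotient.inductionOn w fun γ hw => ?_
    rw [piMap_mk] at hw
    refine ⟨Quotient.mk _ (pushGL (eA : C(A, A')) hAa γ), ?_⟩
    rw [piMap_mk]
    have h1 : GenLoop.Homotopic (pushGL p rfl γ) (pushGL ((eB.symm : C(B', B))) hb1 τ) :=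
      Quotient.exact hw
    have h2 := pushGL_homotopic (eB : C(B, B')) hb2 h1
    have key2 : pushGL p' rfl (pushGL (eA : C(A, A')) hAa γ)
        = pushGL (eB : C(B, B')) hb2 (pushGL p rfl γ) := by
      apply Subtype.ext
      ext y
      exact hc (γ.1 y)
    have key3 : pushGL (eB : C(B, B')) hb2 (pushGL ((eB.symm : C(B', B))) hb1 τ) = τ := by
      apply Subtype.ext
      ext y
      exact eB.apply_symm_apply (τ.1 y)
    rw [key2]
    rw [key3] at h2
    exact Quotient.sound h2

lemma isWeakHomotopyEquiv_transfer (eA : A ≃ₜ A') (eB : B ≃ₜ B') (p : C(A, B)) (p' : C(A', B'))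
    (hc : ∀ a, p' (eA a) = eB (p a)) (hp : IsWeakHomotopyEquiv p) :
    IsWeakHomotopyEquiv p' :=
  ⟨bij_pi0_transfer eA eB p p' hc hp.1,
   fun a' n => bij_piMap_transfer eA eB p p' hc a' (hp.2 (eA.symm a') n)⟩

end PlainTransfer

end EquivLoc
namespace EquivLoc

open ContinuousMap

/-! ### Cube-like probe spaces and probe-continuous bijections -/

section Probe

/-- A space homeomorphic to a finite-dimensional cube. -/
def CubeLike (Z : Type) [TopologicalSpace Z] : Prop :=
  ∃ n : ℕ, Nonempty (Z ≃ₜ (Fin n → unitInterval))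

lemma cubeLike_cube (n : ℕ) : CubeLike (Fin n → unitInterval) :=
  ⟨n, ⟨Homeomorph.refl _⟩⟩

lemma cubeLike_unitInterval : CubeLike unitInterval :=
  ⟨1, ⟨(Homeomorph.funUnique (Fin 1) unitInterval).symm⟩⟩

lemma CubeLike.prod {Z W : Type} [TopologicalSpace Z] [TopologicalSpace W]
    (hZ : CubeLike Z) (hW : CubeLike W) : CubeLike (Z × W) := by
  obtain ⟨n, ⟨e⟩⟩ := hZ
  obtain ⟨m, ⟨f⟩⟩ := hW
  exact ⟨n + m, ⟨(e.prodCongr f).trans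
    ((Homeomorph.sumArrowHomeomorphProdArrow).symm.trans
      (Homeomorph.piCongrLeft (Y := fun _ => unitInterval) finSumFinEquiv))⟩⟩

lemma CubeLike.locallyCompactSpace {Z : Type} [TopologicalSpace Z] (hZ : CubeLike Z) :
    LocallyCompactSpace Z := by
  obtain ⟨n, ⟨e⟩⟩ := hZ
  exact e.locallyCompactSpace_iff.mpr inferInstance

variable {A B : Type} [TopologicalSpace A] [TopologicalSpace B]

/-- A function is probe-continuous if its composite with every map from a cube-like
space is continuous. -/
def ProbeCont (Φ : A → B) : Prop :=
  ∀ (Z : Type) [TopologicalSpace Z], CubeLike Z → ∀ u : C(Z, A), Continuous (Φ ∘ u)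

lemma probeCont_of_continuous {Φ : A → B} (h : Continuous Φ) : ProbeCont Φ :=
  fun _ _ _ u => h.comp u.continuous

end Probe

/-! ### Transfer of weak homotopy equivalences along probe-continuous bijections -/

section WeakTransfer

open scoped unitInterval Topology
open Topology.Homotopy

variable {A B A' B' : Type} [TopologicalSpace A] [TopologicalSpace B]
  [TopologicalSpace A'] [TopologicalSpace B']

/-- Pushing a path through a probe-continuous map. -/
def pushPath {Φ : A → B} (hΦ : ProbeCont Φ) {x y : A} (c : Path x y) : Path (Φ x) (Φ y) where
  toFun := Φ ∘ c
  continuous_toFun := hΦ _ cubeLike_unitInterval c.toContinuousMap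
  source' := by simp
  target' := by simp

private lemma bij_pi0_transfer' {Φa : A → A'} {Ψa : A' → A} {Φb : B → B'} {Ψb : B' → B}
    (ha1 : ∀ x, Ψa (Φa x) = x) (ha2 : ∀ y, Φa (Ψa y) = y)
    (hb1 : ∀ x, Ψb (Φb x) = x) (hb2 : ∀ y, Φb (Ψb y) = y)
    (hpa : ProbeCont Φa) (hpa' : ProbeCont Ψa) (hpb : ProbeCont Φb) (hpb' : ProbeCont Ψb)
    (p : C(A, B)) (p' : C(A', B')) (hc : ∀ a, p' (Φa a) = Φb (p a))
    (hp : Function.Bijective (pi0Map p)) : Function.Bijective (pi0Map p') := by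
  have hc' : ∀ a', p (Ψa a') = Ψb (p' a') := by
    intro a'
    have h1 := hc (Ψa a')
    rw [ha2] at h1
    rw [h1, hb1]
  constructor
  · intro x y
    refine Quotient.inductionOn₂ x y fun u v h => ?_
    rw [pi0Map_mk, pi0Map_mk] at h
    have hj : Joined (p' u) (p' v) := Quotient.exact h
    obtain ⟨pth⟩ := hj
    have hpi : Joined (p (Ψa u)) (p (Ψa v)) :=
      ⟨(pushPath hpb' pth).cast (hc' u) (hc' v)⟩
    have h2 : pi0Map p (Quotient.mk _ (Ψa u)) = pi0Map p (Quotient.mk _ (Ψa v)) := by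
      rw [pi0Map_mk, pi0Map_mk]
      exact Quotient.sound hpi
    have h3 := hp.1 h2
    have hj2 : Joined (Ψa u) (Ψa v) := Quotient.exact h3
    obtain ⟨sg⟩ := hj2
    exact Quotient.sound ⟨(pushPath hpa sg).cast (ha2 u).symm (ha2 v).symm⟩
  · intro z
    refine Quotient.inductionOn z fun b' => ?_
    obtain ⟨w, hw⟩ := hp.2 (Quotient.mk _ (Ψb b'))
    revert hw
    refine Quotient.inductionOn w fun a hw => ?_
    rw [pi0Map_mk] at hw
    refine ⟨Quotient.mk _ (Φa a), ?_⟩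
    rw [pi0Map_mk, hc a]
    have hj : Joined (p a) (Ψb b') := Quotient.exact hw
    obtain ⟨pth⟩ := hj
    exact Quotient.sound ⟨(pushPath hpb pth).cast rfl (hb2 b').symm⟩

/-- Pushing a generalized loop through a probe-continuous map. -/
private def pushW {n : ℕ} {Φ : A → B} (hΦ : ProbeCont Φ) {a : A} {b : B} (hb : Φ a = b)
    (γ : GenLoop (Fin n) A a) : GenLoop (Fin n) B b :=
  ⟨⟨Φ ∘ γ.1, hΦ _ (cubeLike_cube n) γ.1⟩, fun y hy => by
    simp only [ContinuousMap.coe_mk, Function.comp_apply]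
    rw [γ.2 y hy, hb]⟩

private lemma pushW_homotopic {n : ℕ} {Φ : A → B} (hΦ : ProbeCont Φ) {a : A} {b : B}
    (hb : Φ a = b) {γ δ : GenLoop (Fin n) A a} (h : GenLoop.Homotopic γ δ) :
    GenLoop.Homotopic (pushW hΦ hb γ) (pushW hΦ hb δ) := by
  refine h.map fun H => ?_
  exact
    { toContinuousMap := ⟨Φ ∘ H.toContinuousMap,
        hΦ _ (cubeLike_unitInterval.prod (cubeLike_cube n)) H.toContinuousMap⟩
      map_zero_left := fun y => congrArg Φ (H.map_zero_left y)
      map_one_left := fun y => congrArg Φ (H.map_one_left y)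
      prop' := fun t y hy => congrArg Φ (H.prop' t y hy) }

private lemma piMap_mk' {n : ℕ} (f : C(A, B)) (a : A) (γ : GenLoop (Fin n) A a) :
    piMap n f a (Quotient.mk _ γ) = Quotient.mk _ (pushW (probeCont_of_continuous f.continuous) rfl γ) := by
  refine congrArg (Quotient.mk _) ?_
  apply Subtype.ext
  rfl

private lemma bij_piMap_transfer' {n : ℕ} {Φa : A → A'} {Ψa : A' → A} {Φb : B → B'} {Ψb : B' → B}
    (ha1 : ∀ x, Ψa (Φa x) = x) (ha2 : ∀ y, Φa (Ψa y) = y)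
    (hb1 : ∀ x, Ψb (Φb x) = x) (hb2 : ∀ y, Φb (Ψb y) = y)
    (hpa : ProbeCont Φa) (hpa' : ProbeCont Ψa) (hpb : ProbeCont Φb) (hpb' : ProbeCont Ψb)
    (p : C(A, B)) (p' : C(A', B')) (hc : ∀ a, p' (Φa a) = Φb (p a)) (a' : A')
    (hp : Function.Bijective (piMap n p (Ψa a'))) :
    Function.Bijective (piMap n p' a') := by
  have hc' : ∀ x', p (Ψa x') = Ψb (p' x') := by
    intro x'
    have h1 := hc (Ψa x')
    rw [ha2] at h1
    rw [h1, hb1]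
  have hb1' : Ψb (p' a') = p (Ψa a') := (hc' a').symm
  have hb2' : Φb (p (Ψa a')) = p' a' := by
    rw [hc' a', hb2]
  have hAa : Φa (Ψa a') = a' := ha2 a'
  have hpp := probeCont_of_continuous p.continuous
  have hpp' := probeCont_of_continuous p'.continuous
  have key : ∀ γ : GenLoop (Fin n) A' a',
      pushW hpb' hb1' (pushW hpp' rfl γ) = pushW hpp rfl (pushW hpa' rfl γ) := by
    intro γ
    apply Subtype.ext
    apply ContinuousMap.ext
    intro y
    exact (hc' (γ.1 y)).symm
  constructor
  · intro x y
    refine Quotient.inductionOn₂ x y fun γ δ h => ?_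
    rw [piMap_mk', piMap_mk'] at h
    have h1 : GenLoop.Homotopic (pushW hpp' rfl γ) (pushW hpp' rfl δ) := Quotient.exact h
    have h2 := pushW_homotopic hpb' hb1' h1
    rw [key γ, key δ] at h2
    have h3 : piMap n p (Ψa a') (Quotient.mk _ (pushW hpa' rfl γ))
        = piMap n p (Ψa a') (Quotient.mk _ (pushW hpa' rfl δ)) := by
      rw [piMap_mk', piMap_mk']
      refine Quotient.sound ?_
      have e1 : pushW hpp rfl (pushW hpa' rfl γ)
          = pushW (probeCont_of_continuous p.continuous) rfl (pushW hpa' rfl γ) := rfl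
      exact h2
    have h4 := hp.1 h3
    have h5 : GenLoop.Homotopic (pushW hpa' rfl γ) (pushW hpa' rfl δ) := Quotient.exact h4
    have h6 := pushW_homotopic hpa hAa h5
    have keyA : ∀ γ : GenLoop (Fin n) A' a',
        pushW hpa hAa (pushW hpa' rfl γ) = γ := by
      intro γ
      apply Subtype.ext
      apply ContinuousMap.ext
      intro y
      exact ha2 (γ.1 y)
    rw [keyA γ, keyA δ] at h6
    exact Quotient.sound h6
  · intro z
    refine Quotient.inductionOn z fun τ => ?_
    obtain ⟨w, hw⟩ := hp.2 (Quotient.mk _ (pushW hpb' hb1' τ))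
    revert hw
    refine Quotient.inductionOn w fun γ hw => ?_
    rw [piMap_mk'] at hw
    refine ⟨Quotient.mk _ (pushW hpa hAa γ), ?_⟩
    rw [piMap_mk']
    have h1 : GenLoop.Homotopic (pushW hpp rfl γ) (pushW hpb' hb1' τ) := Quotient.exact hw
    have h2 := pushW_homotopic hpb hb2' h1
    have key2 : pushW hpp' rfl (pushW hpa hAa γ) = pushW hpb hb2' (pushW hpp rfl γ) := by
      apply Subtype.ext
      apply ContinuousMap.ext
      intro y
      exact hc (γ.1 y)
    have key3 : pushW hpb hb2' (pushW hpb' hb1' τ) = τ := by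
      apply Subtype.ext
      apply ContinuousMap.ext
      intro y
      exact hb2 (τ.1 y)
    rw [key3] at h2
    refine Quotient.sound ?_
    rw [show pushW (probeCont_of_continuous p'.continuous) rfl (pushW hpa hAa γ)
        = pushW hpp' rfl (pushW hpa hAa γ) from rfl, key2]
    exact h2

lemma isWeakHomotopyEquiv_transfer' {Φa : A → A'} {Ψa : A' → A} {Φb : B → B'} {Ψb : B' → B}
    (ha1 : ∀ x, Ψa (Φa x) = x) (ha2 : ∀ y, Φa (Ψa y) = y)
    (hb1 : ∀ x, Ψb (Φb x) = x) (hb2 : ∀ y, Φb (Ψb y) = y)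
    (hpa : ProbeCont Φa) (hpa' : ProbeCont Ψa) (hpb : ProbeCont Φb) (hpb' : ProbeCont Ψb)
    (p : C(A, B)) (p' : C(A', B')) (hc : ∀ a, p' (Φa a) = Φb (p a))
    (hp : IsWeakHomotopyEquiv p) : IsWeakHomotopyEquiv p' :=
  ⟨bij_pi0_transfer' ha1 ha2 hb1 hb2 hpa hpa' hpb hpb' p p' hc hp.1,
   fun a' n => bij_piMap_transfer' ha1 ha2 hb1 hb2 hpa hpa' hpb hpb' p p' hc a' (hp.2 (Ψa a') n)⟩

end WeakTransfer

end EquivLoc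
namespace EquivLoc

variable {G : Type} [Group G] [TopologicalSpace G]

/-! ### Every `G`-space is fibrant -/

lemma gFibrant_all (X : GSpace G) : GFibrant X := by
  intro H _ n h K _
  refine ⟨h.comp ⟨Prod.fst, continuous_fst⟩, fun z => rfl, fun w => Subtype.ext ?_⟩
  exact @Subsingleton.elim _ (inferInstanceAs (Subsingleton PUnit)) _ _

/-! ### Isomorphisms of based `G`-spaces -/

/-- An isomorphism of based `G`-spaces: an equivariant based homeomorphism. -/
structure GPtIso (X Y : GSpacePt G) where
  hom : GMapPt X Y
  inv : GMapPt Y X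
  left_inv : ∀ x, inv.toCM (hom.toCM x) = x
  right_inv : ∀ y, hom.toCM (inv.toCM y) = y

/-- The inverse isomorphism. -/
def GPtIso.symm {X Y : GSpacePt G} (e : GPtIso X Y) : GPtIso Y X :=
  ⟨e.inv, e.hom, e.right_inv, e.left_inv⟩

/-- The induced homeomorphism on `H`-fixed points. -/
def GPtIso.fixHomeo {X Y : GSpacePt G} (e : GPtIso X Y) (H : Subgroup G) :
    Fix H X.toGSpace ≃ₜ Fix H Y.toGSpace where
  toFun := e.hom.toGMap.fixCM H
  invFun := e.inv.toGMap.fixCM H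
  left_inv := fun x => Subtype.ext (e.left_inv x.1)
  right_inv := fun y => Subtype.ext (e.right_inv y.1)
  continuous_toFun := (e.hom.toGMap.fixCM H).continuous
  continuous_invFun := (e.inv.toGMap.fixCM H).continuous

lemma isGWeakEquiv_transfer {M₁ N₁ M₂ N₂ : GSpacePt G} (eM : GPtIso M₁ M₂) (eN : GPtIso N₁ N₂)
    (p : GMapPt M₁ N₁) (p' : GMapPt M₂ N₂)
    (sq : ∀ x, p'.toCM (eM.hom.toCM x) = eN.hom.toCM (p.toCM x))
    (hp : IsGWeakEquiv p.toGMap) : IsGWeakEquiv p'.toGMap := by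
  intro H hH
  exact isWeakHomotopyEquiv_transfer (eM.fixHomeo H) (eN.fixHomeo H)
    (p.toGMap.fixCM H) (p'.toGMap.fixCM H) (fun x => Subtype.ext (sq x.1)) (hp H hH)

lemma GPtIso.reverse_square {M₁ N₁ M₂ N₂ : GSpacePt G} (eM : GPtIso M₁ M₂) (eN : GPtIso N₁ N₂)
    (p : GMapPt M₁ N₁) (p' : GMapPt M₂ N₂)
    (sq : ∀ x, p'.toCM (eM.hom.toCM x) = eN.hom.toCM (p.toCM x)) :
    ∀ y, p.toCM (eM.inv.toCM y) = eN.inv.toCM (p'.toCM y) := by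
  intro y
  have h1 := sq (eM.inv.toCM y)
  rw [eM.right_inv y] at h1
  rw [h1, eN.left_inv]

end EquivLoc
namespace EquivLoc

variable {G : Type} [Group G] [TopologicalSpace G]

lemma isGWeakEquiv_transfer' {M₁ N₁ M₂ N₂ : GSpacePt G}
    {Φm : M₁.carrier → M₂.carrier} {Ψm : M₂.carrier → M₁.carrier}
    {Φn : N₁.carrier → N₂.carrier} {Ψn : N₂.carrier → N₁.carrier}
    (hm1 : ∀ x, Ψm (Φm x) = x) (hm2 : ∀ y, Φm (Ψm y) = y)
    (hn1 : ∀ x, Ψn (Φn x) = x) (hn2 : ∀ y, Φn (Ψn y) = y)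
    (hem : ∀ (g : G) x, Φm (g • x) = g • Φm x)
    (hen : ∀ (g : G) x, Φn (g • x) = g • Φn x)
    (hpm : ProbeCont Φm) (hpm' : ProbeCont Ψm) (hpn : ProbeCont Φn) (hpn' : ProbeCont Ψn)
    (p : GMapPt M₁ N₁) (p' : GMapPt M₂ N₂)
    (sq : ∀ x, p'.toCM (Φm x) = Φn (p.toCM x))
    (hp : IsGWeakEquiv p.toGMap) : IsGWeakEquiv p'.toGMap := by
  have hem' : ∀ (g : G) y, Ψm (g • y) = g • Ψm y := by
    intro g y
    have h := hem g (Ψm y)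
    rw [hm2] at h
    rw [← h, hm1]
  have hen' : ∀ (g : G) y, Ψn (g • y) = g • Ψn y := by
    intro g y
    have h := hen g (Ψn y)
    rw [hn2] at h
    rw [← h, hn1]
  intro H hH
  have fixΦm : ∀ x : Fix H M₁.toGSpace, ∀ h ∈ H, h • Φm x.1 = Φm x.1 := by
    intro x h hh
    rw [← hem, x.2 h hh]
  have fixΨm : ∀ x : Fix H M₂.toGSpace, ∀ h ∈ H, h • Ψm x.1 = Ψm x.1 := by
    intro x h hh
    rw [← hem', x.2 h hh]
  have fixΦn : ∀ x : Fix H N₁.toGSpace, ∀ h ∈ H, h • Φn x.1 = Φn x.1 := by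
    intro x h hh
    rw [← hen, x.2 h hh]
  have fixΨn : ∀ x : Fix H N₂.toGSpace, ∀ h ∈ H, h • Ψn x.1 = Ψn x.1 := by
    intro x h hh
    rw [← hen', x.2 h hh]
  refine isWeakHomotopyEquiv_transfer'
    (Φa := fun x : Fix H M₁.toGSpace => (⟨Φm x.1, fixΦm x⟩ : Fix H M₂.toGSpace))
    (Ψa := fun x : Fix H M₂.toGSpace => (⟨Ψm x.1, fixΨm x⟩ : Fix H M₁.toGSpace))
    (Φb := fun x : Fix H N₁.toGSpace => (⟨Φn x.1, fixΦn x⟩ : Fix H N₂.toGSpace))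
    (Ψb := fun x : Fix H N₂.toGSpace => (⟨Ψn x.1, fixΨn x⟩ : Fix H N₁.toGSpace))
    (fun x => Subtype.ext (hm1 x.1)) (fun y => Subtype.ext (hm2 y.1))
    (fun x => Subtype.ext (hn1 x.1)) (fun y => Subtype.ext (hn2 y.1))
    ?_ ?_ ?_ ?_
    (p.toGMap.fixCM H) (p'.toGMap.fixCM H)
    (fun x => Subtype.ext (sq x.1)) (hp H hH)
  · intro Z _ hZ u
    exact Continuous.subtype_mk
      (hpm Z hZ (ContinuousMap.comp ⟨Subtype.val, continuous_subtype_val⟩ u)) _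
  · intro Z _ hZ u
    exact Continuous.subtype_mk
      (hpm' Z hZ (ContinuousMap.comp ⟨Subtype.val, continuous_subtype_val⟩ u)) _
  · intro Z _ hZ u
    exact Continuous.subtype_mk
      (hpn Z hZ (ContinuousMap.comp ⟨Subtype.val, continuous_subtype_val⟩ u)) _
  · intro Z _ hZ u
    exact Continuous.subtype_mk
      (hpn' Z hZ (ContinuousMap.comp ⟨Subtype.val, continuous_subtype_val⟩ u)) _

end EquivLoc
namespace EquivLoc

open ContinuousMap

/-! ### Cube-generated spaces -/

section CubeGenDefs

variable {A : Type} [TopologicalSpace A]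

/-- A space is cube-generated if its topology is final with respect to all maps from
finite-dimensional cubes. -/
def IsCubeGen (A : Type) [TopologicalSpace A] : Prop :=
  ∀ U : Set A, (∀ (n : ℕ) (c : C((Fin n → unitInterval), A)), IsOpen (c ⁻¹' U)) → IsOpen U

lemma IsCubeGen.continuous_of_probes {T : Type} [TopologicalSpace T]
    (hA : IsCubeGen A) {h : A → T}
    (hc : ∀ (n : ℕ) (c : C((Fin n → unitInterval), A)), Continuous (h ∘ c)) :
    Continuous h := by
  rw [continuous_def]
  intro U hU
  refine hA _ fun n c => ?_
  have h2 := (hc n c).isOpen_preimage U hU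
  rwa [Set.preimage_comp] at h2

/-- The cube-generated replacement topology. -/
def kTop (A : Type) [TopologicalSpace A] : TopologicalSpace A where
  IsOpen U := ∀ (n : ℕ) (c : C((Fin n → unitInterval), A)), IsOpen (c ⁻¹' U)
  isOpen_univ := fun _ _ => by simp
  isOpen_inter := fun U V hU hV n c => by
    rw [Set.preimage_inter]
    exact (hU n c).inter (hV n c)
  isOpen_sUnion := fun S hS n c => by
    rw [Set.preimage_sUnion]
    exact isOpen_biUnion fun U hU => hS U hU n c

lemma kTop_isOpen_of_isOpen {U : Set A} (hU : IsOpen U) : (kTop A).IsOpen U :=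
  fun _ c => c.continuous.isOpen_preimage U hU

lemma probe_continuous_kTop {Z : Type} [TopologicalSpace Z] (hZ : CubeLike Z) (c : C(Z, A)) :
    @Continuous Z A _ (kTop A) c := by
  obtain ⟨n, ⟨e⟩⟩ := hZ
  rw [@continuous_def Z A _ (kTop A)]
  intro U hU
  have h1 : IsOpen ((c.comp (e.symm : C((Fin n → unitInterval), Z))) ⁻¹' U) := hU n _
  have h2 : IsOpen (e ⁻¹' ((c.comp (e.symm : C((Fin n → unitInterval), Z))) ⁻¹' U)) :=
    e.continuous.isOpen_preimage _ h1
  have h3 : e ⁻¹' ((c.comp (e.symm : C((Fin n → unitInterval), Z))) ⁻¹' U) = c ⁻¹' U := by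
    ext z
    simp [Homeomorph.symm_apply_apply]
  rwa [h3] at h2

end CubeGenDefs

/-! ### The cube-generated replacement of a based `G`-space -/

variable {G : Type} [Group G] [TopologicalSpace G]

/-- The cube-generated replacement of a based `G`-space. -/
def kGSpacePt (A : GSpacePt G) : GSpacePt G where
  carrier := A.carrier
  topInst := kTop A.carrier
  mulInst := A.mulInst
  smul_cont := fun g => by
    rw [@continuous_def A.carrier A.carrier (kTop A.carrier) (kTop A.carrier)]
    intro U hU
    intro n c
    have h1 : IsOpen ((⟨fun z => g • (c z), (A.smul_cont g).comp c.continuous⟩ :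
        C((Fin n → unitInterval), A.carrier)) ⁻¹' U) := hU n _
    exact h1
  pt := A.pt
  pt_fixed := A.pt_fixed

/-- The canonical map from the cube-generated replacement. -/
def kProj (A : GSpacePt G) : GMapPt (kGSpacePt A) A :=
  ⟨⟨⟨fun x => x, by
      show @Continuous A.carrier A.carrier (kTop A.carrier) A.topInst (fun x => x)
      rw [continuous_def]
      intro U hU
      exact kTop_isOpen_of_isOpen hU⟩, fun _ _ => rfl⟩, rfl⟩

lemma isWeakHomotopyEquiv_id {T : Type} [TopologicalSpace T] :
    IsWeakHomotopyEquiv (ContinuousMap.id T) := by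
  constructor
  · constructor
    · intro x y
      refine Quotient.inductionOn₂ x y fun u v h => ?_
      rw [pi0Map_mk, pi0Map_mk] at h
      exact h
    · intro z
      refine Quotient.inductionOn z fun t => ?_
      exact ⟨Quotient.mk _ t, rfl⟩
  · intro a n
    have hid : ∀ γ : GenLoop (Fin (n + 1)) T a,
        pushW (probeCont_of_continuous (ContinuousMap.id T).continuous) rfl γ = γ := by
      intro γ
      apply Subtype.ext
      apply ContinuousMap.ext
      intro y
      rfl
    constructor
    · intro x y
      refine Quotient.inductionOn₂ x y fun γ δ h => ?_
      rw [piMap_mk', piMap_mk', hid γ, hid δ] at h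
      exact h
    · intro z
      refine Quotient.inductionOn z fun τ => ?_
      refine ⟨Quotient.mk _ τ, ?_⟩
      exact (piMap_mk' _ _ τ).trans (congrArg _ (hid τ))

lemma kProj_trivFib (A : GSpacePt G) : IsGTrivFib (kProj A).toGMap := by
  constructor
  · intro H _ n h K hyp
    refine ⟨⟨fun w => ⟨(K w).1, (K w).2⟩, ?_⟩, ?_, ?_⟩
    · refine Continuous.subtype_mk ?_ _
      exact probe_continuous_kTop ((cubeLike_cube n).prod cubeLike_unitInterval)
        ⟨fun w => ((K w).1 : A.carrier), continuous_subtype_val.comp K.continuous⟩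
    · intro z
      apply Subtype.ext
      exact congrArg Subtype.val (hyp z)
    · intro w
      apply Subtype.ext
      rfl
  · intro H hH
    -- transfer from the identity using probe-continuity of the back map
    have hback : ProbeCont (fun x : Fix H A.toGSpace =>
        (⟨x.1, x.2⟩ : Fix H (kGSpacePt A).toGSpace)) := by
      intro Z _ hZ u
      refine Continuous.subtype_mk ?_ _
      exact probe_continuous_kTop hZ ⟨fun z => (u z).1, continuous_subtype_val.comp u.continuous⟩
    refine isWeakHomotopyEquiv_transfer'
      (Φa := fun x : Fix H A.toGSpace => (⟨x.1, x.2⟩ : Fix H (kGSpacePt A).toGSpace))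
      (Ψa := fun x : Fix H (kGSpacePt A).toGSpace => (⟨x.1, x.2⟩ : Fix H A.toGSpace))
      (Φb := fun x : Fix H A.toGSpace => x) (Ψb := fun x => x)
      (fun x => Subtype.ext rfl) (fun y => Subtype.ext rfl)
      (fun x => rfl) (fun y => rfl)
      hback ?_ (probeCont_of_continuous continuous_id) (probeCont_of_continuous continuous_id)
      (ContinuousMap.id _) ((kProj A).toGMap.fixCM H)
      (fun x => Subtype.ext rfl) isWeakHomotopyEquiv_id
    · intro Z _ hZ u
      refine Continuous.subtype_mk ?_ _
      exact (kProj A).toCM.continuous.comp (continuous_subtype_val.comp u.continuous)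

lemma isCubeGen_of_cofibrant (A : GSpacePt G) (hA : GCofibrantPt A) : IsCubeGen A.carrier := by
  obtain ⟨l, hl⟩ := hA (kProj A) (kProj_trivFib A) (GMapPt.id A)
  have hfun : ∀ x, l.toCM x = x := by
    intro x
    exact congrArg (fun (m : GMapPt A A) => m.toCM x) hl
  intro U hU
  have h2 : IsOpen (l.toCM ⁻¹' U) := by
    refine l.toCM.continuous.isOpen_preimage U ?_
    exact hU
  have h3 : l.toCM ⁻¹' U = U := by
    ext x
    show l.toCM x ∈ U ↔ x ∈ U
    rw [hfun x]
    exact Iff.rfl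
  rwa [h3] at h2

end EquivLoc
namespace EquivLoc

variable {G : Type} [Group G] [TopologicalSpace G]

/-! ### The loop-suspension adjunction -/

section Adjunction

variable (A X : GSpacePt G)

/-- The quotient map onto the suspension, as a continuous map. -/
def qCM : C(A.carrier × unitInterval, (Susp A).carrier) :=
  ⟨Quot.mk _, continuous_quot_mk⟩

lemma susp_mk_eq_pt {a : A.carrier} {t : unitInterval} (h : t = 0 ∨ t = 1 ∨ a = A.pt) :
    Quot.mk (suspRel A) (a, t) = (Susp A).pt :=
  Quot.sound (Or.inr ⟨h, Or.inl rfl⟩)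

lemma based_susp_val (φ : (mapGPt (Susp A) X).carrier) {a : A.carrier} {t : unitInterval}
    (h : t = 0 ∨ t = 1 ∨ a = A.pt) :
    φ.1 (Quot.mk (suspRel A) (a, t)) = X.pt := by
  rw [susp_mk_eq_pt A h]
  exact φ.2

/-- The forward map of the adjunction: from maps on the suspension to loop-valued maps. -/
def adjFwd (φ : (mapGPt (Susp A) X).carrier) : (mapGPt A (Loop X)).carrier :=
  ⟨⟨fun a => ⟨(φ.1.comp (qCM A)).curry a,
      based_susp_val A X φ (Or.inl rfl), based_susp_val A X φ (Or.inr (Or.inl rfl))⟩,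
    (φ.1.comp (qCM A)).curry.continuous.subtype_mk _⟩,
   Subtype.ext (ContinuousMap.ext fun t => based_susp_val A X φ (Or.inr (Or.inr rfl)))⟩

/-- The underlying family of paths of a loop-valued map. -/
def loopVal (ψ : (mapGPt A (Loop X)).carrier) : C(A.carrier, C(unitInterval, X.carrier)) :=
  ⟨fun a => (ψ.1 a).1, continuous_subtype_val.comp ψ.1.continuous⟩

lemma loopVal_deg (ψ : (mapGPt A (Loop X)).carrier) :
    ∀ z : A.carrier × unitInterval,
      (z.2 = 0 ∨ z.2 = 1 ∨ z.1 = A.pt) → loopVal A X ψ z.1 z.2 = X.pt := by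
  rintro z (h | h | h)
  · show (ψ.1 z.1).1 z.2 = X.pt
    rw [h]
    exact (ψ.1 z.1).2.1
  · show (ψ.1 z.1).1 z.2 = X.pt
    rw [h]
    exact (ψ.1 z.1).2.2
  · show (ψ.1 z.1).1 z.2 = X.pt
    rw [h, ψ.2]
    rfl

/-- The backward map of the adjunction. -/
def adjBwd (ψ : (mapGPt A (Loop X)).carrier) : (mapGPt (Susp A) X).carrier :=
  ⟨⟨Quot.lift (fun z => loopVal A X ψ z.1 z.2)
      (fun z w h => by
        rcases h with rfl | ⟨hz, hw⟩
        · rfl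
        · show loopVal A X ψ z.1 z.2 = loopVal A X ψ w.1 w.2
          rw [loopVal_deg A X ψ z hz, loopVal_deg A X ψ w hw]),
    continuous_quot_lift _ (loopVal A X ψ).uncurry.continuous⟩,
   loopVal_deg A X ψ (A.pt, 0) (Or.inl rfl)⟩

lemma adj_left_inv (φ : (mapGPt (Susp A) X).carrier) : adjBwd A X (adjFwd A X φ) = φ := by
  apply Subtype.ext
  apply ContinuousMap.ext
  intro s
  refine Quot.inductionOn s fun z => ?_
  rfl

lemma adj_right_inv (ψ : (mapGPt A (Loop X)).carrier) : adjFwd A X (adjBwd A X ψ) = ψ := by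
  apply Subtype.ext
  apply ContinuousMap.ext
  intro a
  apply Subtype.ext
  apply ContinuousMap.ext
  intro t
  rfl

lemma adjFwd_equivar (g : G) (φ : (mapGPt (Susp A) X).carrier) :
    adjFwd A X (g • φ) = g • adjFwd A X φ := by
  apply Subtype.ext
  apply ContinuousMap.ext
  intro a
  apply Subtype.ext
  apply ContinuousMap.ext
  intro t
  show g • φ.1 (g⁻¹ • Quot.mk (suspRel A) (a, t)) = g • φ.1 (Quot.mk (suspRel A) (g⁻¹ • a, t))
  rw [susp_smul_mk]

lemma adjBwd_equivar (g : G) (ψ : (mapGPt A (Loop X)).carrier) :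
    adjBwd A X (g • ψ) = g • adjBwd A X ψ := by
  have h := adjFwd_equivar A X g (adjBwd A X ψ)
  rw [adj_right_inv] at h
  rw [← h, adj_left_inv]

lemma adjFwd_pt : adjFwd A X (mapGPt (Susp A) X).pt = (mapGPt A (Loop X)).pt := by
  apply Subtype.ext
  apply ContinuousMap.ext
  intro a
  apply Subtype.ext
  apply ContinuousMap.ext
  intro t
  rfl

lemma adjBwd_pt : adjBwd A X (mapGPt A (Loop X)).pt = (mapGPt (Susp A) X).pt := by
  rw [← adjFwd_pt, adj_left_inv]

end Adjunction

lemma adj_square' {A B : GSpacePt G} (f : GMapPt A B) (X : GSpacePt G) :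
    ∀ φ, (precompGPt f (Loop X)).toCM (adjFwd B X φ)
      = adjFwd A X ((precompGPt (SuspMap f) X).toCM φ) := by
  intro φ
  apply Subtype.ext
  apply ContinuousMap.ext
  intro a
  apply Subtype.ext
  apply ContinuousMap.ext
  intro t
  rfl

end EquivLoc
namespace EquivLoc

open ContinuousMap

variable {G : Type} [Group G] [TopologicalSpace G]

section ProbeAdj

variable (A X : GSpacePt G)

/-- Probe continuity of the forward adjunction map, for cube-generated `A`. -/
lemma probeCont_adjFwd (hk : IsCubeGen A.carrier) : ProbeCont (adjFwd A X) := by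
  intro Z _ hZ u
  haveI : LocallyCompactSpace Z := hZ.locallyCompactSpace
  -- the family of slice maps
  set Fmap : C(Z, C(A.carrier × unitInterval, X.carrier)) :=
    ⟨fun z => ((u z).1.comp (qCM A)),
      (ContinuousMap.continuous_precomp (qCM A)).comp
        (continuous_subtype_val.comp u.continuous)⟩ with hFmap
  set Wfun : A.carrier → C(Z × unitInterval, X.carrier) := fun a =>
    ContinuousMap.uncurry
      ⟨fun z => (Fmap z).comp (⟨fun t => (a, t), continuous_const.prodMk continuous_id⟩ :
          C(unitInterval, A.carrier × unitInterval)),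
        (ContinuousMap.continuous_precomp _).comp Fmap.continuous⟩ with hWfun
  have hW : Continuous Wfun := by
    refine hk.continuous_of_probes fun m c => ?_
    refine ContinuousMap.continuous_of_continuous_uncurry _ ?_
    -- diagonal evaluation trick
    set D := (Fin m → unitInterval) × (Z × unitInterval) with hD
    set mhat : C(D, (Susp A).carrier) :=
      ⟨fun d => Quot.mk _ (c d.1, d.2.2),
        continuous_quot_mk.comp ((c.continuous.comp continuous_fst).prodMk
          (continuous_snd.comp continuous_snd))⟩ with hmhat
    set Uhat : C(D, C(D, X.carrier)) :=
      ⟨fun d => ((u d.2.1).1).comp mhat,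
        (ContinuousMap.continuous_precomp mhat).comp
          (continuous_subtype_val.comp (u.continuous.comp (continuous_fst.comp continuous_snd)))⟩
      with hUhat
    exact Uhat.continuous.eval continuous_id
  -- joint continuity of w
  have hw : Continuous fun p : Z × (A.carrier × unitInterval) =>
      (u p.1).1 (Quot.mk (suspRel A) (p.2.1, p.2.2)) := by
    have h1 : Continuous fun p : Z × (A.carrier × unitInterval) => Wfun p.2.1 :=
      hW.comp (continuous_fst.comp continuous_snd)
    have h2 : Continuous fun p : Z × (A.carrier × unitInterval) => (p.1, p.2.2) :=
      continuous_fst.prodMk (continuous_snd.comp continuous_snd)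
    exact h1.eval h2
  -- assemble
  refine Continuous.subtype_mk ?_ _
  refine ContinuousMap.continuous_of_continuous_uncurry _ ?_
  refine Continuous.subtype_mk ?_ _
  refine ContinuousMap.continuous_of_continuous_uncurry _ ?_
  exact hw.comp ((continuous_fst.comp continuous_fst).prodMk
    ((continuous_snd.comp continuous_fst).prodMk continuous_snd))

/-- Probe continuity of the backward adjunction map, for cube-generated `A`. -/
lemma probeCont_adjBwd (hk : IsCubeGen A.carrier) : ProbeCont (adjBwd A X) := by
  intro Z _ hZ v
  haveI : LocallyCompactSpace Z := hZ.locallyCompactSpace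
  set W' : A.carrier → C(Z × unitInterval, X.carrier) := fun a =>
    ContinuousMap.uncurry
      ⟨fun z => ((v z).1 a).1,
        continuous_subtype_val.comp ((continuous_eval_const a).comp
          (continuous_subtype_val.comp v.continuous))⟩ with hW'
  have hWc : Continuous W' := by
    refine hk.continuous_of_probes fun m c => ?_
    refine ContinuousMap.continuous_of_continuous_uncurry _ ?_
    set D := (Fin m → unitInterval) × (Z × unitInterval) with hD
    set chat : C(D, A.carrier) := ⟨fun d => c d.1, c.continuous.comp continuous_fst⟩ with hchat
    set valCM : C((Loop X).carrier, C(unitInterval, X.carrier)) :=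
      ⟨Subtype.val, continuous_subtype_val⟩ with hvalCM
    set graph : C(D, D × unitInterval) :=
      ⟨fun d => (d, d.2.2), continuous_id.prodMk (continuous_snd.comp continuous_snd)⟩
      with hgraph
    have hpipe : Continuous fun ψ : (mapGPt A (Loop X)).carrier =>
        ((ContinuousMap.uncurry (valCM.comp (ψ.1.comp chat))).comp graph : C(D, X.carrier)) := by
      refine (ContinuousMap.continuous_precomp graph).comp ?_
      refine ContinuousMap.continuous_uncurry.comp ?_
      refine (ContinuousMap.continuous_postcomp valCM).comp ?_
      exact (ContinuousMap.continuous_precomp chat).comp continuous_subtype_val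
    set Vhat : C(D, C(D, X.carrier)) :=
      ⟨fun d => (ContinuousMap.uncurry (valCM.comp ((v d.2.1).1.comp chat))).comp graph,
        hpipe.comp (v.continuous.comp (continuous_fst.comp continuous_snd))⟩ with hVhat
    exact Vhat.continuous.eval continuous_id
  have hw' : Continuous fun p : Z × (A.carrier × unitInterval) =>
      ((v p.1).1 p.2.1).1 p.2.2 := by
    have h1 : Continuous fun p : Z × (A.carrier × unitInterval) => W' p.2.1 :=
      hWc.comp (continuous_fst.comp continuous_snd)
    have h2 : Continuous fun p : Z × (A.carrier × unitInterval) => (p.1, p.2.2) :=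
      continuous_fst.prodMk (continuous_snd.comp continuous_snd)
    exact h1.eval h2
  refine Continuous.subtype_mk ?_ _
  refine ContinuousMap.continuous_of_continuous_uncurry _ ?_
  exact (isQuotientMap_quot_mk (r := suspRel A)).continuous_lift_prod_right hw'

end ProbeAdj

end EquivLoc
namespace EquivLoc

theorem suspension_local_iff_loop_local
    {E : Type} [NormedAddCommGroup E] [NormedSpace ℝ E]
    {HM : Type} [TopologicalSpace HM] (IM : ModelWithCorners ℝ E HM)
    {G : Type} [Group G] [TopologicalSpace G] [ChartedSpace HM G] [LieGroup IM (⊤ : ℕ∞) G]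
    [CompactSpace G]
    {A B : GSpacePt G} (f : GMapPt A B) (hA : GCofibrantPt A) (hB : GCofibrantPt B)
    (X : GSpacePt G) (hX : GConnected X.toGSpace) :
    IsFLocalPt (SuspMap f) X ↔ IsFLocalPt f (Loop X) := by
  have hkA := isCubeGen_of_cofibrant A hA
  have hkB := isCubeGen_of_cofibrant B hB
  have sqF := adj_square' f X
  constructor
  · rintro ⟨-, hw⟩
    refine ⟨gFibrant_all _, ?_⟩
    exact isGWeakEquiv_transfer'
      (adj_left_inv B X) (adj_right_inv B X) (adj_left_inv A X) (adj_right_inv A X)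
      (adjFwd_equivar B X) (adjFwd_equivar A X)
      (probeCont_adjFwd B X hkB) (probeCont_adjBwd B X hkB)
      (probeCont_adjFwd A X hkA) (probeCont_adjBwd A X hkA)
      (precompGPt (SuspMap f) X) (precompGPt f (Loop X)) sqF hw
  · rintro ⟨-, hw⟩
    refine ⟨gFibrant_all _, ?_⟩
    have sqR : ∀ ψ, (precompGPt (SuspMap f) X).toCM (adjBwd B X ψ)
        = adjBwd A X ((precompGPt f (Loop X)).toCM ψ) := by
      intro ψ
      have h := sqF (adjBwd B X ψ)
      rw [adj_right_inv] at h
      rw [h, adj_left_inv]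
    exact isGWeakEquiv_transfer'
      (adj_right_inv B X) (adj_left_inv B X) (adj_right_inv A X) (adj_left_inv A X)
      (adjBwd_equivar B X) (adjBwd_equivar A X)
      (probeCont_adjBwd B X hkB) (probeCont_adjFwd B X hkB)
      (probeCont_adjBwd A X hkA) (probeCont_adjFwd A X hkA)
      (precompGPt f (Loop X)) (precompGPt (SuspMap f) X) sqR hw

end EquivLoc
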